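/- In the setting of Milnor patching (A ≅ B ×_D C with l : C → D surjective), for any finitely generated projective A-module E, the canonical map E → ker(E ⊗_A B ⊕ E ⊗_A C → E ⊗_A D), e ↦ (e⊗1, e⊗1), is an isomorphism of A-modules. -/
import Mathlib


open TensorProduct

section Aux

variable {A B C D : Type} [CommRing A] [CommRing B] [CommRing C] [CommRing D]
    [Algebra A B] [Algebra A C] [Algebra A D] [Algebra B D] [Algebra C D]
    [IsScalarTower A B D] [IsScalarTower A C D]

/-- Uniqueness part of the fiber-product property. -/
lemma milnor_aux_inj
    (hfib : ∀ (b : B) (c : C), algebraMap B D b = algebraMap C D c →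
      ∃! a : A, algebraMap A B a = b ∧ algebraMap A C a = c)
    (a a' : A) (hB : algebraMap A B a = algebraMap A B a')
    (hC : algebraMap A C a = algebraMap A C a') : a = a' := by
  have hd : algebraMap B D (algebraMap A B a) = algebraMap C D (algebraMap A C a) := by
    rw [← IsScalarTower.algebraMap_apply, ← IsScalarTower.algebraMap_apply]
  obtain ⟨a₀, _, huniq⟩ := hfib (algebraMap A B a) (algebraMap A C a) hd
  have h1 : a = a₀ := huniq a ⟨rfl, rfl⟩
  have h2 : a' = a₀ := huniq a' ⟨hB.symm, hC.symm⟩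
  rw [h1, h2]

/-- Compatibility of `piScalarRight` with base change along `B →ₐ[A] D`. -/
lemma milnor_aux_compat (n : ℕ) (x : B ⊗[A] (Fin n → A)) :
    piScalarRight A D D (Fin n)
      (LinearMap.rTensor (Fin n → A) (IsScalarTower.toAlgHom A B D).toLinearMap x) =
    fun i => algebraMap B D (piScalarRight A B B (Fin n) x i) := by
  induction x using TensorProduct.induction_on with
  | zero => funext i; simp
  | tmul b f =>
      funext i
      simp [Algebra.smul_def, IsScalarTower.algebraMap_apply A B D, map_mul]
  | add u v hu hv =>
      funext i
      simp only [map_add, Pi.add_apply, hu, hv, map_add]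

lemma milnor_aux_one_tmul (n : ℕ) (f : Fin n → A) :
    piScalarRight A B B (Fin n) ((1 : B) ⊗ₜ[A] f) = fun i => algebraMap A B (f i) := by
  funext i
  simp [Algebra.algebraMap_eq_smul_one]

end Aux

/-- In the Milnor patching situation (`A ≅ B ×_D C`, `C → D` surjective), for any
finitely generated projective `A`-module `E` the canonical map
`E → ker(B ⊗[A] E ⊕ C ⊗[A] E → D ⊗[A] E)`, `e ↦ (1 ⊗ e, 1 ⊗ e)`,
is an isomorphism of `A`-modules: it is injective, and its image is exactly the
kernel of the difference of the two base-change maps. -/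
theorem milnor_patching_unit_iso
    (A B C D : Type) [CommRing A] [CommRing B] [CommRing C] [CommRing D]
    [Algebra A B] [Algebra A C] [Algebra A D] [Algebra B D] [Algebra C D]
    [IsScalarTower A B D] [IsScalarTower A C D]
    (hfib : ∀ (b : B) (c : C), algebraMap B D b = algebraMap C D c →
      ∃! a : A, algebraMap A B a = b ∧ algebraMap A C a = c)
    (hsurj : Function.Surjective (algebraMap C D))
    (E : Type) [AddCommGroup E] [Module A E]
    [Module.Finite A E] [Module.Projective A E] :
    Function.Injective
      (fun e : E => (((1 : B) ⊗ₜ[A] e : B ⊗[A] E), ((1 : C) ⊗ₜ[A] e : C ⊗[A] E))) ∧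
    (∀ (x : B ⊗[A] E) (y : C ⊗[A] E),
      LinearMap.rTensor E (IsScalarTower.toAlgHom A B D).toLinearMap x =
        LinearMap.rTensor E (IsScalarTower.toAlgHom A C D).toLinearMap y ↔
      ∃ e : E, (1 : B) ⊗ₜ[A] e = x ∧ (1 : C) ⊗ₜ[A] e = y) := by
  classical
  -- obtain a splitting E →ₗ (Fin n → A) →ₗ E of the identity
  obtain ⟨n, p, hp⟩ := Module.Finite.exists_fin' A E
  obtain ⟨s, hs⟩ := Module.projective_lifting_property p (LinearMap.id : E →ₗ[A] E) hp
  have hps : ∀ e : E, p (s e) = e := fun e => LinearMap.congr_fun hs e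
  set F := Fin n → A with hF
  constructor
  · -- injectivity
    intro e e' h
    have hB : (1 : B) ⊗ₜ[A] e = (1 : B) ⊗ₜ[A] e' := congrArg Prod.fst h
    have hC : (1 : C) ⊗ₜ[A] e = (1 : C) ⊗ₜ[A] e' := congrArg Prod.snd h
    have hB' : (1 : B) ⊗ₜ[A] (s e) = (1 : B) ⊗ₜ[A] (s e') := by
      have := congrArg (LinearMap.lTensor B s) hB
      simpa [LinearMap.lTensor_tmul] using this
    have hC' : (1 : C) ⊗ₜ[A] (s e) = (1 : C) ⊗ₜ[A] (s e') := by
      have := congrArg (LinearMap.lTensor C s) hC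
      simpa [LinearMap.lTensor_tmul] using this
    have hB'' := congrArg (piScalarRight A B B (Fin n)) hB'
    have hC'' := congrArg (piScalarRight A C C (Fin n)) hC'
    rw [milnor_aux_one_tmul, milnor_aux_one_tmul] at hB''
    rw [milnor_aux_one_tmul, milnor_aux_one_tmul] at hC''
    have hse : s e = s e' := by
      funext i
      exact milnor_aux_inj hfib _ _ (congrFun hB'' i) (congrFun hC'' i)
    calc e = p (s e) := (hps e).symm
      _ = p (s e') := by rw [hse]
      _ = e' := hps e'
  · intro x y
    constructor
    · intro hxy
      -- push x, y into the free module
      set gB := (IsScalarTower.toAlgHom A B D).toLinearMap with hgB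
      set gC := (IsScalarTower.toAlgHom A C D).toLinearMap with hgC
      set x' := LinearMap.lTensor B s x with hx'
      set y' := LinearMap.lTensor C s y with hy'
      have hcomm : LinearMap.rTensor F gB x' = LinearMap.rTensor F gC y' := by
        have h1 : LinearMap.rTensor F gB x' = LinearMap.lTensor D s
            (LinearMap.rTensor E gB x) := by
          rw [hx']
          rw [← LinearMap.comp_apply, ← LinearMap.comp_apply,
            LinearMap.rTensor_comp_lTensor, LinearMap.lTensor_comp_rTensor]
        have h2 : LinearMap.rTensor F gC y' = LinearMap.lTensor D s
            (LinearMap.rTensor E gC y) := by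
          rw [hy']
          rw [← LinearMap.comp_apply, ← LinearMap.comp_apply,
            LinearMap.rTensor_comp_lTensor, LinearMap.lTensor_comp_rTensor]
        rw [h1, h2, hxy]
      -- pass to coordinates
      set xb := piScalarRight A B B (Fin n) x' with hxb
      set yc := piScalarRight A C C (Fin n) y' with hyc
      have hcoord : ∀ i, algebraMap B D (xb i) = algebraMap C D (yc i) := by
        intro i
        have h1 := milnor_aux_compat (A := A) (B := B) (D := D) n x'
        have h2 := milnor_aux_compat (A := A) (B := C) (D := D) n y'
        rw [hcomm] at h1
        have := h1.symm.trans h2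
        exact congrFun this i
      choose a ha using fun i => (hfib (xb i) (yc i) (hcoord i)).exists
      -- the candidate element
      refine ⟨p a, ?_, ?_⟩
      · have h1 : (1 : B) ⊗ₜ[A] (a : F) = x' := by
          apply (piScalarRight A B B (Fin n)).injective
          rw [milnor_aux_one_tmul, ← hxb]
          funext i
          exact (ha i).1
        have h2 : (1 : B) ⊗ₜ[A] (p a) = LinearMap.lTensor B p ((1 : B) ⊗ₜ[A] (a : F)) := by
          simp [LinearMap.lTensor_tmul]
        rw [h2, h1, hx', ← LinearMap.comp_apply, ← LinearMap.lTensor_comp, hs,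
          LinearMap.lTensor_id, LinearMap.id_apply]
      · have h1 : (1 : C) ⊗ₜ[A] (a : F) = y' := by
          apply (piScalarRight A C C (Fin n)).injective
          rw [milnor_aux_one_tmul, ← hyc]
          funext i
          exact (ha i).2
        have h2 : (1 : C) ⊗ₜ[A] (p a) = LinearMap.lTensor C p ((1 : C) ⊗ₜ[A] (a : F)) := by
          simp [LinearMap.lTensor_tmul]
        rw [h2, h1, hy', ← LinearMap.comp_apply, ← LinearMap.lTensor_comp, hs,
          LinearMap.lTensor_id, LinearMap.id_apply]
    · rintro ⟨e, rfl, rfl⟩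
      simp [LinearMap.rTensor_tmul]
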